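/- For every (α,β,γ) ∈ (K^*)^3, the formulas v_k·e1 = α^{-1} β^2 ((q^{4k}-1)/(1-q^4)) v_{k-1} for 1 ≤ k ≤ l-1 and v_0·e1 = 0, v_k·e3 = q^{2k} β v_k, v_k·z = γ v_k, v_k·w = α v_{k+1 (mod l)} (for 0 ≤ k ≤ l-1) define a right B-module structure on the K-vector space with basis v_0,…,v_{l-1}, and the resulting module V2(α,β,γ) is a simple B-module of K-dimension l. -/

import Mathlib

noncomputable section

open MulOpposite

/-- The defining relations of the "good" subalgebra `B` of `U_q^+(B_2)`, on the free algebra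
on generators `e1 = ι 0`, `e3 = ι 1`, `z = ι 2`, `w = ι 3`
(where `w = e2·e3 + z/(q^2-1)` inside `U_q^+(B_2)`). -/
inductive BqRel (K : Type*) [Field K] (q : K) :
    FreeAlgebra K (Fin 4) → FreeAlgebra K (Fin 4) → Prop
  | e1e3 : BqRel K q (FreeAlgebra.ι K 0 * FreeAlgebra.ι K 1)
      (q⁻¹ ^ 2 • (FreeAlgebra.ι K 1 * FreeAlgebra.ι K 0))
  | e1z : BqRel K q (FreeAlgebra.ι K 0 * FreeAlgebra.ι K 2)
      (FreeAlgebra.ι K 2 * FreeAlgebra.ι K 0)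
  | e3z : BqRel K q (FreeAlgebra.ι K 1 * FreeAlgebra.ι K 2)
      (FreeAlgebra.ι K 2 * FreeAlgebra.ι K 1)
  | wz : BqRel K q (FreeAlgebra.ι K 3 * FreeAlgebra.ι K 2)
      (FreeAlgebra.ι K 2 * FreeAlgebra.ι K 3)
  | we3 : BqRel K q (FreeAlgebra.ι K 3 * FreeAlgebra.ι K 1)
      (q ^ 2 • (FreeAlgebra.ι K 1 * FreeAlgebra.ι K 3))
  | we1 : BqRel K q (FreeAlgebra.ι K 3 * FreeAlgebra.ι K 0)
      (FreeAlgebra.ι K 0 * FreeAlgebra.ι K 3 - FreeAlgebra.ι K 1 ^ 2)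

/-- The algebra `B`, presented by generators `e1, e3, z, w` and the relations above. -/
abbrev Bq (K : Type*) [Field K] (q : K) : Type _ := RingQuot (BqRel K q)

variable (K : Type*) [Field K] (q : K)

/-- The generator `e1` of `B`. -/
def Be1 : Bq K q := RingQuot.mkAlgHom K (BqRel K q) (FreeAlgebra.ι K 0)
/-- The generator `e3` of `B`. -/
def Be3 : Bq K q := RingQuot.mkAlgHom K (BqRel K q) (FreeAlgebra.ι K 1)
/-- The generator `z` of `B`. -/
def Bz : Bq K q := RingQuot.mkAlgHom K (BqRel K q) (FreeAlgebra.ι K 2)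
/-- The generator `w` of `B`. -/
def Bw : Bq K q := RingQuot.mkAlgHom K (BqRel K q) (FreeAlgebra.ι K 3)

/-- coefficient for the `e1`-action -/
def ccoef (α β : K) (x : ℕ) : K := α⁻¹ * β ^ 2 * ((q ^ (4 * x) - 1) / (1 - q ^ 4))

/-- the operator for `e1` -/
def rowE1 (α β : K) (n : ℕ) : (Fin (n + 1) → K) →ₗ[K] (Fin (n + 1) → K) where
  toFun v := fun j => ccoef K q α β ((j + 1 : Fin (n + 1)) : ℕ) * v (j + 1)
  map_add' u v := funext fun j => by simp [mul_add]
  map_smul' a v := funext fun j => by simp [smul_eq_mul]; ring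

/-- the operator for `e3` -/
def rowE3 (β : K) (n : ℕ) : (Fin (n + 1) → K) →ₗ[K] (Fin (n + 1) → K) where
  toFun v := fun j => (q ^ (2 * (j : ℕ)) * β) * v j
  map_add' u v := funext fun j => by simp [mul_add]
  map_smul' a v := funext fun j => by simp [smul_eq_mul]; ring

/-- the operator for `z` -/
def rowZ (γ : K) (n : ℕ) : (Fin (n + 1) → K) →ₗ[K] (Fin (n + 1) → K) where
  toFun v := fun j => γ * v j
  map_add' u v := funext fun j => by simp [mul_add]
  map_smul' a v := funext fun j => by simp [smul_eq_mul]; ring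

/-- the operator for `w` -/
def rowW (α : K) (n : ℕ) : (Fin (n + 1) → K) →ₗ[K] (Fin (n + 1) → K) where
  toFun v := fun j => α * v (j - 1)
  map_add' u v := funext fun j => by simp [mul_add]
  map_smul' a v := funext fun j => by simp [smul_eq_mul]; ring

/-- the representation on the free algebra -/
def repF (α β γ : K) (n : ℕ) :
    FreeAlgebra K (Fin 4) →ₐ[K] (Module.End K (Fin (n + 1) → K))ᵐᵒᵖ :=
  FreeAlgebra.lift K
    ![op (rowE1 K q α β n), op (rowE3 K q β n), op (rowZ K γ n), op (rowW K α n)]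

lemma repF0 (α β γ : K) (n : ℕ) :
    repF K q α β γ n (FreeAlgebra.ι K 0) = op (rowE1 K q α β n) := by
  simp [repF]

lemma repF1 (α β γ : K) (n : ℕ) :
    repF K q α β γ n (FreeAlgebra.ι K 1) = op (rowE3 K q β n) := by
  simp [repF]

lemma repF2 (α β γ : K) (n : ℕ) :
    repF K q α β γ n (FreeAlgebra.ι K 2) = op (rowZ K γ n) := by
  simp [repF]

lemma repF3 (α β γ : K) (n : ℕ) :
    repF K q α β γ n (FreeAlgebra.ι K 3) = op (rowW K α n) := by
  simp [repF]

lemma rowE1_apply (α β : K) (n : ℕ) (v : Fin (n + 1) → K) (j : Fin (n + 1)) :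
    rowE1 K q α β n v j = ccoef K q α β ((j + 1 : Fin (n + 1)) : ℕ) * v (j + 1) := rfl

lemma rowE3_apply (β : K) (n : ℕ) (v : Fin (n + 1) → K) (j : Fin (n + 1)) :
    rowE3 K q β n v j = (q ^ (2 * (j : ℕ)) * β) * v j := rfl

lemma rowZ_apply (γ : K) (n : ℕ) (v : Fin (n + 1) → K) (j : Fin (n + 1)) :
    rowZ K γ n v j = γ * v j := rfl

lemma rowW_apply (α : K) (n : ℕ) (v : Fin (n + 1) → K) (j : Fin (n + 1)) :
    rowW K α n v j = α * v (j - 1) := rfl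

open scoped Fin.CommRing Fin.NatCast in
/-- For `(α,β,γ) ∈ (K^*)^3`, the formulas
`v_k·e1 = α⁻¹ β^2 ((q^{4k}-1)/(1-q^4)) v_{k-1}` (for `k ≥ 1`), `v_0·e1 = 0`,
`v_k·e3 = q^{2k} β v_k`, `v_k·z = γ v_k`, `v_k·w = α v_{k+1 (mod l)}` define a right
`B`-module structure on the `K`-vector space with basis `v_0, …, v_{l-1}`, and the
resulting module `V2(α,β,γ)` is simple of `K`-dimension `l`. -/
theorem stmt10 (m : ℕ) (hm : 5 ≤ m) (hq : IsPrimitiveRoot q m)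
    (l : ℕ) (hl : l = if Odd m then m else m / 2)
    (α β γ : K) (hα : α ≠ 0) (hβ : β ≠ 0) (hγ : γ ≠ 0) :
    ∃ ρ : Bq K q →ₐ[K] (Module.End K (Fin l → K))ᵐᵒᵖ,
      (∀ k : Fin l, ∀ hk : 0 < (k : ℕ), (ρ (Be1 K q)).unop (Pi.single k 1) =
        (α⁻¹ * β ^ 2 * ((q ^ (4 * (k : ℕ)) - 1) / (1 - q ^ 4))) •
          (Pi.single (⟨(k : ℕ) - 1, Nat.lt_of_le_of_lt (Nat.sub_le _ _) k.isLt⟩ : Fin l) 1 :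
            Fin l → K)) ∧
      (∀ k : Fin l, (k : ℕ) = 0 → (ρ (Be1 K q)).unop (Pi.single k 1) = 0) ∧
      (∀ k : Fin l, (ρ (Be3 K q)).unop (Pi.single k 1) =
        (q ^ (2 * (k : ℕ)) * β) • (Pi.single k 1 : Fin l → K)) ∧
      (∀ k : Fin l, (ρ (Bz K q)).unop (Pi.single k 1) =
        γ • (Pi.single k 1 : Fin l → K)) ∧
      (∀ k : Fin l, (ρ (Bw K q)).unop (Pi.single k 1) =
        α • (Pi.single (finRotate l k) 1 : Fin l → K)) ∧
      Nontrivial (Fin l → K) ∧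
      (∀ W : Submodule K (Fin l → K),
        (∀ b : Bq K q, ∀ v ∈ W, (ρ b).unop v ∈ W) → W = ⊥ ∨ W = ⊤) ∧
      Module.finrank K (Fin l → K) = l := by
  classical
  have hm0 : m ≠ 0 := by omega
  have hq0 : q ≠ 0 := by
    intro h
    have h1 := hq.pow_eq_one
    rw [h, zero_pow hm0] at h1
    exact zero_ne_one h1
  have hme : ¬ Odd m → m % 2 = 0 := by
    intro h
    rcases Nat.even_or_odd m with he | ho
    · exact Nat.even_iff.mp he
    · exact absurd ho h
  have hl3 : 3 ≤ l := by
    by_cases ho : Odd m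
    · rw [hl, if_pos ho]; omega
    · rw [hl, if_neg ho]; have := hme ho; omega
  have hq2l : q ^ (2 * l) = 1 := by
    by_cases ho : Odd m
    · rw [hl, if_pos ho, mul_comm, pow_mul, hq.pow_eq_one, one_pow]
    · have h2 : 2 * (m / 2) = m := by have := hme ho; omega
      rw [hl, if_neg ho, h2, hq.pow_eq_one]
  have hq4l : q ^ (4 * l) = 1 := by
    rw [show 4 * l = 2 * l * 2 from by ring, pow_mul, hq2l, one_pow]
  have hq4 : q ^ 4 ≠ 1 := by
    intro h
    have hd := hq.dvd_of_pow_eq_one 4 h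
    have := Nat.le_of_dvd (by norm_num) hd
    omega
  have h1q4 : (1 : K) - q ^ 4 ≠ 0 := sub_ne_zero.mpr (Ne.symm hq4)
  have hdvd0 : ∀ d : ℕ, d < l → m ∣ 2 * d → d = 0 := by
    intro d hd hdvd
    by_cases ho : Odd m
    · rw [hl, if_pos ho] at hd
      obtain ⟨c, hc⟩ := hdvd
      obtain ⟨t, ht⟩ := ho
      match c with
      | 0 => omega
      | 1 => omega
      | (c + 2) =>
        have : m * 2 ≤ m * (c + 2) := Nat.mul_le_mul_left m (by omega)
        omega
    · rw [hl, if_neg ho] at hd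
      have h2 := hme ho
      rcases Nat.eq_zero_or_pos d with h | h
      · exact h
      · have := Nat.le_of_dvd (by omega) hdvd
        omega
  have hinj0 : ∀ i j : ℕ, i < l → j < l → i ≤ j → q ^ (2 * i) = q ^ (2 * j) → i = j := by
    intro i j hi hj hij h
    have hd : j - i < l := by omega
    have h2 : q ^ (2 * i) * q ^ (2 * (j - i)) = q ^ (2 * i) * 1 := by
      rw [← pow_add, mul_one, show 2 * i + 2 * (j - i) = 2 * j from by omega, h]
    have h3 : q ^ (2 * (j - i)) = 1 := mul_left_cancel₀ (pow_ne_zero _ hq0) h2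
    have h4 := hq.dvd_of_pow_eq_one _ h3
    have := hdvd0 _ hd h4
    omega
  obtain ⟨n, rfl⟩ : ∃ n, l = n + 1 := ⟨l - 1, by omega⟩
  have hmod2 : ∀ x : ℕ, q ^ (2 * (x % (n + 1))) = q ^ (2 * x) := by
    intro x
    have h1 : q ^ (2 * (n + 1) * (x / (n + 1))) = 1 := by
      rw [pow_mul, hq2l, one_pow]
    conv_rhs => rw [← Nat.mod_add_div x (n + 1)]
    rw [show 2 * (x % (n + 1) + (n + 1) * (x / (n + 1)))
        = 2 * (x % (n + 1)) + 2 * (n + 1) * (x / (n + 1)) from by ring,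
      pow_add, h1, mul_one]
  have hmod4 : ∀ x : ℕ, q ^ (4 * (x % (n + 1))) = q ^ (4 * x) := by
    intro x
    have h1 : q ^ (4 * (n + 1) * (x / (n + 1))) = 1 := by
      rw [pow_mul, hq4l, one_pow]
    conv_rhs => rw [← Nat.mod_add_div x (n + 1)]
    rw [show 4 * (x % (n + 1) + (n + 1) * (x / (n + 1)))
        = 4 * (x % (n + 1)) + 4 * (n + 1) * (x / (n + 1)) from by ring,
      pow_add, h1, mul_one]
  have h1fin : ((1 : Fin (n + 1)) : ℕ) = 1 := by
    rw [Fin.val_one']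
    exact Nat.mod_eq_of_lt (by omega)
  have hvaladd : ∀ j : Fin (n + 1), ((j + 1 : Fin (n + 1)) : ℕ) = ((j : ℕ) + 1) % (n + 1) := by
    intro j; rw [Fin.val_add, h1fin]
  have hlam : ∀ j : Fin (n + 1),
      q ^ (2 * ((j + 1 : Fin (n + 1)) : ℕ)) = q ^ 2 * q ^ (2 * (j : ℕ)) := by
    intro j
    rw [hvaladd, hmod2, show 2 * ((j : ℕ) + 1) = 2 * (j : ℕ) + 2 from by ring, pow_add]
    ring
  have hcc : ∀ j : Fin (n + 1),
      α * ccoef K q α β ((j + 1 : Fin (n + 1)) : ℕ)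
        = α * ccoef K q α β (j : ℕ) - q ^ (4 * (j : ℕ)) * β ^ 2 := by
    intro j
    have h1 : ccoef K q α β ((j + 1 : Fin (n + 1)) : ℕ) = ccoef K q α β ((j : ℕ) + 1) := by
      rw [hvaladd]; unfold ccoef; rw [hmod4]
    rw [h1]
    unfold ccoef
    rw [show 4 * ((j : ℕ) + 1) = 4 * (j : ℕ) + 4 from by ring, pow_add]
    field_simp
    ring
  have hinj : ∀ i j : Fin (n + 1), q ^ (2 * (i : ℕ)) = q ^ (2 * (j : ℕ)) → i = j := by
    intro i j h
    rcases le_total (i : ℕ) (j : ℕ) with hle | hle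
    · exact Fin.ext (hinj0 _ _ i.isLt j.isLt hle h)
    · exact (Fin.ext (hinj0 _ _ j.isLt i.isLt hle h.symm)).symm
  have hrel : ∀ ⦃x y⦄, BqRel K q x y → repF K q α β γ n x = repF K q α β γ n y := by
    intro x y h
    cases h with
    | e1e3 =>
      rw [map_mul, map_smul, map_mul, repF0, repF1,
        ← MulOpposite.op_mul, ← MulOpposite.op_mul, ← MulOpposite.op_smul]
      refine congrArg op (LinearMap.ext fun v => funext fun j => ?_)
      simp only [Module.End.mul_apply, LinearMap.smul_apply, Pi.smul_apply, smul_eq_mul,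
        rowE1_apply, rowE3_apply]
      rw [hlam j]
      field_simp
    | e1z =>
      rw [map_mul, map_mul, repF0, repF2,
        ← MulOpposite.op_mul, ← MulOpposite.op_mul]
      refine congrArg op (LinearMap.ext fun v => funext fun j => ?_)
      simp only [Module.End.mul_apply, rowE1_apply, rowZ_apply]
      ring
    | e3z =>
      rw [map_mul, map_mul, repF1, repF2,
        ← MulOpposite.op_mul, ← MulOpposite.op_mul]
      refine congrArg op (LinearMap.ext fun v => funext fun j => ?_)
      simp only [Module.End.mul_apply, rowE3_apply, rowZ_apply]
      ring
    | wz =>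
      rw [map_mul, map_mul, repF3, repF2,
        ← MulOpposite.op_mul, ← MulOpposite.op_mul]
      refine congrArg op (LinearMap.ext fun v => funext fun j => ?_)
      simp only [Module.End.mul_apply, rowW_apply, rowZ_apply]
      ring
    | we3 =>
      rw [map_mul, map_smul, map_mul, repF3, repF1,
        ← MulOpposite.op_mul, ← MulOpposite.op_mul, ← MulOpposite.op_smul]
      refine congrArg op (LinearMap.ext fun v => funext fun j => ?_)
      simp only [Module.End.mul_apply, LinearMap.smul_apply, Pi.smul_apply, smul_eq_mul,
        rowE3_apply, rowW_apply]
      have hj : j - 1 + 1 = j := by ring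
      have h := hlam (j - 1)
      rw [hj] at h
      rw [h]
      ring
    | we1 =>
      rw [map_mul, map_sub, map_mul, map_pow, repF3, repF0, repF1,
        ← MulOpposite.op_mul, ← MulOpposite.op_mul, ← MulOpposite.op_pow,
        ← MulOpposite.op_sub]
      refine congrArg op ?_
      rw [pow_two]
      refine LinearMap.ext fun v => funext fun j => ?_
      simp only [Module.End.mul_apply, LinearMap.sub_apply, Pi.sub_apply,
        rowE1_apply, rowE3_apply, rowW_apply]
      rw [show j + 1 - 1 = j from by ring, show j - 1 + 1 = j from by ring]
      have hp : q ^ (2 * (j : ℕ)) * q ^ (2 * (j : ℕ)) = q ^ (4 * (j : ℕ)) := by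
        rw [← pow_add, show 2 * (j : ℕ) + 2 * (j : ℕ) = 4 * (j : ℕ) from by ring]
      linear_combination v j * hcc j + β ^ 2 * v j * hp
  set ρ : Bq K q →ₐ[K] (Module.End K (Fin (n + 1) → K))ᵐᵒᵖ :=
    RingQuot.liftAlgHom K ⟨repF K q α β γ n, hrel⟩ with hρdef
  have hρ1 : ρ (Be1 K q) = op (rowE1 K q α β n) := by
    rw [hρdef, Be1, RingQuot.liftAlgHom_mkAlgHom_apply, repF0]
  have hρ2 : ρ (Be3 K q) = op (rowE3 K q β n) := by
    rw [hρdef, Be3, RingQuot.liftAlgHom_mkAlgHom_apply, repF1]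
  have hρ3 : ρ (Bz K q) = op (rowZ K γ n) := by
    rw [hρdef, Bz, RingQuot.liftAlgHom_mkAlgHom_apply, repF2]
  have hρ4 : ρ (Bw K q) = op (rowW K α n) := by
    rw [hρdef, Bw, RingQuot.liftAlgHom_mkAlgHom_apply, repF3]
  have bullet1 : ∀ k : Fin (n + 1), 0 < (k : ℕ) → (ρ (Be1 K q)).unop (Pi.single k 1) =
      (α⁻¹ * β ^ 2 * ((q ^ (4 * (k : ℕ)) - 1) / (1 - q ^ 4))) •
        (Pi.single (⟨(k : ℕ) - 1, Nat.lt_of_le_of_lt (Nat.sub_le _ _) k.isLt⟩ : Fin (n + 1)) 1 :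
          Fin (n + 1) → K) := by
    intro k hk
    rw [hρ1, unop_op]
    have hval : (⟨(k : ℕ) - 1, Nat.lt_of_le_of_lt (Nat.sub_le _ _) k.isLt⟩ : Fin (n + 1)) + 1
        = k := by
      apply Fin.ext
      rw [hvaladd]
      show ((k : ℕ) - 1 + 1) % (n + 1) = (k : ℕ)
      rw [show (k : ℕ) - 1 + 1 = (k : ℕ) from by omega, Nat.mod_eq_of_lt k.isLt]
    funext j
    rw [rowE1_apply, Pi.smul_apply]
    rcases eq_or_ne j
        (⟨(k : ℕ) - 1, Nat.lt_of_le_of_lt (Nat.sub_le _ _) k.isLt⟩ : Fin (n + 1)) with heq | hne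
    · have hj1 : j + 1 = k := by rw [heq, hval]
      rw [hj1, Pi.single_eq_same, heq, Pi.single_eq_same, mul_one, smul_eq_mul, mul_one]
      rfl
    · have hne1 : j + 1 ≠ k := by
        intro h
        apply hne
        rw [← hval] at h
        exact add_right_cancel h
      rw [Pi.single_eq_of_ne hne1, mul_zero, Pi.single_eq_of_ne hne, smul_zero]
  have bullet2 : ∀ k : Fin (n + 1), (k : ℕ) = 0 → (ρ (Be1 K q)).unop (Pi.single k 1) = 0 := by
    intro k hk0
    rw [hρ1, unop_op]
    funext j
    rw [rowE1_apply, Pi.zero_apply]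
    rcases eq_or_ne (j + 1) k with heq | hne
    · rw [heq, Pi.single_eq_same, mul_one, hk0]
      simp [ccoef]
    · rw [Pi.single_eq_of_ne hne, mul_zero]
  have bullet3 : ∀ k : Fin (n + 1), (ρ (Be3 K q)).unop (Pi.single k 1) =
      (q ^ (2 * (k : ℕ)) * β) • (Pi.single k 1 : Fin (n + 1) → K) := by
    intro k
    rw [hρ2, unop_op]
    funext j
    rw [rowE3_apply, Pi.smul_apply, smul_eq_mul]
    rcases eq_or_ne j k with rfl | hne
    · rw [Pi.single_eq_same]
    · rw [Pi.single_eq_of_ne hne, mul_zero, mul_zero]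
  have bullet4 : ∀ k : Fin (n + 1), (ρ (Bz K q)).unop (Pi.single k 1) =
      γ • (Pi.single k 1 : Fin (n + 1) → K) := by
    intro k
    rw [hρ3, unop_op]
    funext j
    rw [rowZ_apply, Pi.smul_apply, smul_eq_mul]
  have bullet5 : ∀ k : Fin (n + 1), (ρ (Bw K q)).unop (Pi.single k 1) =
      α • (Pi.single (finRotate (n + 1) k) 1 : Fin (n + 1) → K) := by
    intro k
    rw [hρ4, unop_op]
    funext j
    rw [rowW_apply, Pi.smul_apply, smul_eq_mul, finRotate_succ_apply]
    rcases eq_or_ne j (k + 1) with rfl | hne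
    · rw [show k + 1 - 1 = k from by ring, Pi.single_eq_same, Pi.single_eq_same]
    · have hne2 : j - 1 ≠ k := by
        intro h
        apply hne
        rw [← h]
        ring
      rw [Pi.single_eq_of_ne hne2, Pi.single_eq_of_ne hne, mul_zero]
  have hnt : Nontrivial (Fin (n + 1) → K) := by
    refine ⟨Pi.single 0 1, 0, fun h => ?_⟩
    have h0 := congrFun h 0
    rw [Pi.single_eq_same, Pi.zero_apply] at h0
    exact one_ne_zero h0
  have hsimple : ∀ W : Submodule K (Fin (n + 1) → K),
      (∀ b : Bq K q, ∀ v ∈ W, (ρ b).unop v ∈ W) → W = ⊥ ∨ W = ⊤ := by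
    intro W hW
    by_cases hbot : W = ⊥
    · exact Or.inl hbot
    right
    have hE3mem : ∀ v ∈ W, (fun t : Fin (n + 1) => (q ^ (2 * (t : ℕ)) * β) * v t) ∈ W := by
      intro v hv
      have h1 := hW (Be3 K q) v hv
      rw [hρ2] at h1
      exact h1
    have key : ∀ N : ℕ, ∀ v : Fin (n + 1) → K, v ∈ W → v ≠ 0 →
        (Finset.univ.filter fun t => v t ≠ 0).card ≤ N →
        ∃ k : Fin (n + 1), Pi.single k (1 : K) ∈ W := by
      intro N
      induction N with
      | zero =>
        intro v hv hne hcard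
        obtain ⟨j, hj⟩ := Function.ne_iff.mp hne
        rw [Pi.zero_apply] at hj
        have hmem : j ∈ Finset.univ.filter fun t => v t ≠ 0 :=
          Finset.mem_filter.mpr ⟨Finset.mem_univ _, hj⟩
        have := Finset.card_pos.mpr ⟨j, hmem⟩
        omega
      | succ N ih =>
        intro v hv hne hcard
        obtain ⟨j, hj⟩ := Function.ne_iff.mp hne
        rw [Pi.zero_apply] at hj
        by_cases hs : ∃ s, s ≠ j ∧ v s ≠ 0
        · obtain ⟨s, hsj, hvs⟩ := hs
          set v' : Fin (n + 1) → K :=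
            fun t => (q ^ (2 * (t : ℕ)) * β) * v t - (q ^ (2 * (s : ℕ)) * β) * v t with hv'def
          have hv'W : v' ∈ W := by
            have h3 := W.sub_mem (hE3mem v hv) (W.smul_mem (q ^ (2 * (s : ℕ)) * β) hv)
            have he : v' = (fun t : Fin (n + 1) => (q ^ (2 * (t : ℕ)) * β) * v t)
                - (q ^ (2 * (s : ℕ)) * β) • v := by
              funext t
              simp [hv'def, smul_eq_mul]
            rw [he]
            exact h3
          have hlamne : q ^ (2 * (j : ℕ)) * β ≠ q ^ (2 * (s : ℕ)) * β := by
            intro h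
            exact hsj ((hinj j s (mul_right_cancel₀ hβ h)).symm)
          have hv'j : v' j ≠ 0 := by
            rw [hv'def]
            simp only []
            rw [← sub_mul]
            exact mul_ne_zero (sub_ne_zero.mpr hlamne) hj
          have hv'ne : v' ≠ 0 := by
            intro h
            rw [h] at hv'j
            exact hv'j rfl
          have hsub : (Finset.univ.filter fun t => v' t ≠ 0) ⊆
              (Finset.univ.filter fun t => v t ≠ 0).erase s := by
            intro t ht
            rw [Finset.mem_filter] at ht
            rw [Finset.mem_erase, Finset.mem_filter]
            refine ⟨?_, Finset.mem_univ _, ?_⟩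
            · rintro rfl
              exact ht.2 (by simp [hv'def])
            · intro hvt
              exact ht.2 (by simp [hv'def, hvt])
          have hcard' : (Finset.univ.filter fun t => v' t ≠ 0).card ≤ N := by
            have h1 := Finset.card_le_card hsub
            have hsmem : s ∈ Finset.univ.filter fun t => v t ≠ 0 :=
              Finset.mem_filter.mpr ⟨Finset.mem_univ _, hvs⟩
            have h2 := Finset.card_erase_of_mem hsmem
            have h3 := Finset.card_pos.mpr ⟨s, hsmem⟩
            omega
          exact ih v' hv'W hv'ne hcard'
        · push_neg at hs
          refine ⟨j, ?_⟩
          have he : Pi.single j (1 : K) = (v j)⁻¹ • v := by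
            funext t
            rcases eq_or_ne t j with rfl | hne2
            · rw [Pi.single_eq_same, Pi.smul_apply, smul_eq_mul, inv_mul_cancel₀ hj]
            · rw [Pi.single_eq_of_ne hne2, Pi.smul_apply, hs t hne2, smul_zero]
          rw [he]
          exact W.smul_mem _ hv
    obtain ⟨v, hvW, hvne⟩ := (Submodule.ne_bot_iff W).mp hbot
    obtain ⟨k, hk⟩ := key _ v hvW hvne le_rfl
    have hstep : ∀ k0 : Fin (n + 1), Pi.single k0 (1 : K) ∈ W →
        Pi.single (k0 + 1) (1 : K) ∈ W := by
      intro k0 hk0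
      have h1 := hW (Bw K q) _ hk0
      rw [bullet5 k0, finRotate_succ_apply] at h1
      have h2 := W.smul_mem α⁻¹ h1
      rwa [smul_smul, inv_mul_cancel₀ hα, one_smul] at h2
    have hall : ∀ i : Fin (n + 1), Pi.single i (1 : K) ∈ W := by
      have hN : ∀ N : ℕ, Pi.single (k + (N : Fin (n + 1))) (1 : K) ∈ W := by
        intro N
        induction N with
        | zero => simpa using hk
        | succ N ihN =>
          have h1 := hstep _ ihN
          have hcast : ((N + 1 : ℕ) : Fin (n + 1)) = ((N : ℕ) : Fin (n + 1)) + 1 := by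
            push_cast
            ring
          rw [hcast, ← add_assoc]
          exact h1
      intro i
      have hi := hN ((i - k : Fin (n + 1)) : ℕ)
      rwa [Fin.cast_val_eq_self, show k + (i - k) = i from by ring] at hi
    rw [eq_top_iff]
    intro x _
    rw [pi_eq_sum_univ x]
    refine Submodule.sum_mem W fun i _ => Submodule.smul_mem W _ ?_
    have he : (fun j => if i = j then (1 : K) else 0) = Pi.single i 1 := by
      funext t
      rw [Pi.single_apply]
      by_cases h : t = i
      · subst h; simp
      · rw [if_neg h, if_neg (Ne.symm h)]
    rw [he]
    exact hall i
  exact ⟨ρ, bullet1, bullet2, bullet3, bullet4, bullet5, hnt, hsimple, by simp⟩
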